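/- For n even, let M_s = −Σ_{j=0}^{n/2−1}(E_{2j+1,2j+2} − E_{2j+2,2j+1}) and M_n = Σ_{j=1}^{n−2} E_{j,j+2} be n×n real matrices, and M_{0,1} = M_s + M_n. Then M_s M_n = M_n M_s, M_s² = −Id, M_n^{n/2} = 0, and the characteristic polynomial of M_{0,1} equals (X² + 1)^{n/2}, which also equals its minimal polynomial. -/

import Mathlib

open Polynomial

/-- For `n = 2m` even, with `M_s = -Σ_{j=0}^{m-1}(E_{2j+1,2j+2} - E_{2j+2,2j+1})`
(1-indexed) and `M_n = Σ_{j=1}^{n-2} E_{j,j+2}`, and `M_{0,1} = M_s + M_n`: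
`M_s M_n = M_n M_s`, `M_s² = -Id`, `M_n^{m} = 0`, and both the characteristic and the
minimal polynomial of `M_{0,1}` equal `(X² + 1)^{m}`. -/
theorem stmt15 {n m : ℕ} (hm : 0 < m) (hn : n = 2 * m)
    (Ms Mn M01 : Matrix (Fin n) (Fin n) ℝ)
    (hMs : Ms = -∑ j : Fin m,
      (Matrix.single (⟨2 * j.1, by have := j.2; omega⟩ : Fin n)
          (⟨2 * j.1 + 1, by have := j.2; omega⟩ : Fin n) (1 : ℝ) -
        Matrix.single (⟨2 * j.1 + 1, by have := j.2; omega⟩ : Fin n)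
          (⟨2 * j.1, by have := j.2; omega⟩ : Fin n) (1 : ℝ)))
    (hMn : Mn = ∑ j : Fin (n - 2),
      Matrix.single (⟨j.1, by have := j.2; omega⟩ : Fin n)
        (⟨j.1 + 2, by have := j.2; omega⟩ : Fin n) (1 : ℝ))
    (hM01 : M01 = Ms + Mn) :
    Ms * Mn = Mn * Ms ∧
    Ms ^ 2 = -1 ∧
    Mn ^ m = 0 ∧
    M01.charpoly = (X ^ 2 + 1) ^ m ∧
    minpoly ℝ M01 = (X ^ 2 + 1) ^ m := by
  -- entrywise formula for Mn
  have hMn' : ∀ i j : Fin n, Mn i j = if j.1 = i.1 + 2 then 1 else 0 := by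
    intro i j
    rw [hMn]
    simp only [Matrix.sum_apply, Matrix.single, Matrix.of_apply, Fin.ext_iff]
    by_cases h : j.1 = i.1 + 2
    · rw [if_pos h, Finset.sum_eq_single (⟨i.1, by omega⟩ : Fin (n-2))]
      · simp [h]
      · intro b _ hb
        rw [if_neg]
        rintro ⟨h1, h2⟩
        exact hb (Fin.ext (by simp only [Fin.val_mk] at h1 h2 ⊢; omega))
      · intro h'; exact absurd (Finset.mem_univ _) h'
    · rw [if_neg h, Finset.sum_eq_zero]
      intro b _
      rw [if_neg]
      rintro ⟨h1, h2⟩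
      omega
  -- entrywise formula for Ms
  have hMs' : ∀ i j : Fin n, Ms i j =
      if i.1 % 2 = 0 ∧ j.1 = i.1 + 1 then -1
      else if i.1 % 2 = 1 ∧ i.1 = j.1 + 1 then 1 else 0 := by
    intro i j
    rw [hMs]
    simp only [Matrix.neg_apply, Matrix.sum_apply, Matrix.sub_apply,
      Matrix.single, Matrix.of_apply]
    rw [Finset.sum_eq_single (⟨i.1 / 2, by have := i.2; omega⟩ : Fin m)]
    · simp only [Fin.ext_iff, Fin.val_mk]
      split_ifs <;> first | (exfalso; omega) | norm_num
    · intro b _ hb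
      have hb' : b.1 ≠ i.1 / 2 := fun h => hb (Fin.ext h)
      rw [if_neg, if_neg]
      · simp
      · simp only [Fin.ext_iff, Fin.val_mk]; omega
      · simp only [Fin.ext_iff, Fin.val_mk]; omega
    · intro h'; exact absurd (Finset.mem_univ _) h'
  -- multiplication by Mn shifts
  have mulMn : ∀ (A : Matrix (Fin n) (Fin n) ℝ) (i j : Fin n),
      (A * Mn) i j = if h : 2 ≤ j.1 then A i ⟨j.1 - 2, by omega⟩ else 0 := by
    intro A i j
    rw [Matrix.mul_apply]
    by_cases h : 2 ≤ j.1
    · rw [dif_pos h, Finset.sum_eq_single (⟨j.1 - 2, by omega⟩ : Fin n)]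
      · rw [hMn', if_pos (by simp; omega), mul_one]
      · intro b _ hb
        rw [hMn', if_neg, mul_zero]
        intro hc
        exact hb (Fin.ext (by simp; omega))
      · intro h'; exact absurd (Finset.mem_univ _) h'
    · rw [dif_neg h, Finset.sum_eq_zero]
      intro b _
      rw [hMn', if_neg (by omega), mul_zero]
  have MnMul : ∀ (A : Matrix (Fin n) (Fin n) ℝ) (i j : Fin n),
      (Mn * A) i j = if h : i.1 + 2 < n then A ⟨i.1 + 2, h⟩ j else 0 := by
    intro A i j
    rw [Matrix.mul_apply]
    by_cases h : i.1 + 2 < n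
    · rw [dif_pos h, Finset.sum_eq_single (⟨i.1 + 2, h⟩ : Fin n)]
      · rw [hMn', if_pos (by simp), one_mul]
      · intro b _ hb
        rw [hMn', if_neg, zero_mul]
        intro hc
        exact hb (Fin.ext (by simpa using hc))
      · intro h'; exact absurd (Finset.mem_univ _) h'
    · rw [dif_neg h, Finset.sum_eq_zero]
      intro b _
      rw [hMn', if_neg (by have := b.2; omega), zero_mul]
  -- commutation
  have hcomm : Ms * Mn = Mn * Ms := by
    ext i j
    rw [mulMn, MnMul]
    have hi := i.2
    have hj := j.2
    split_ifs with h1 h2 h2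
    · rw [hMs', hMs']
      simp only [Fin.val_mk]
      split_ifs <;> first | rfl | omega
    · rw [hMs']
      simp only [Fin.val_mk]
      split_ifs with hc1 hc2 <;> first | rfl | omega
    · rw [hMs']
      simp only [Fin.val_mk]
      split_ifs with hc1 hc2 <;> first | rfl | omega
    · rfl
  -- Ms ^ 2 = -1
  have hMs2 : Ms ^ 2 = -1 := by
    ext i j
    rw [pow_two, Matrix.mul_apply, Matrix.neg_apply, Matrix.one_apply]
    have hi := i.2
    have hj := j.2
    by_cases h : i.1 % 2 = 0
    · rw [Finset.sum_eq_single (⟨i.1 + 1, by omega⟩ : Fin n)]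
      · rw [hMs', hMs']
        simp only [Fin.val_mk, Fin.ext_iff, and_true, true_and]
        split_ifs <;> first | (exfalso; omega) | norm_num
      · intro b _ hb
        have hb' : b.1 ≠ i.1 + 1 := fun hc => hb (Fin.ext hc)
        rw [hMs' i b, if_neg (by omega), if_neg (by omega), zero_mul]
      · intro h'; exact absurd (Finset.mem_univ _) h'
    · rw [Finset.sum_eq_single (⟨i.1 - 1, by omega⟩ : Fin n)]
      · rw [hMs', hMs']
        simp only [Fin.val_mk, Fin.ext_iff, and_true, true_and]
        split_ifs <;> first | (exfalso; omega) | norm_num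
      · intro b _ hb
        have hb' : b.1 ≠ i.1 - 1 := fun hc => hb (Fin.ext hc)
        rw [hMs' i b, if_neg (by omega), if_neg (by omega), zero_mul]
      · intro h'; exact absurd (Finset.mem_univ _) h'
  -- powers of Mn
  have hMnpow : ∀ k, ∀ i j : Fin n, (Mn ^ k) i j = if j.1 = i.1 + 2 * k then 1 else 0 := by
    intro k
    induction k with
    | zero =>
      intro i j
      simp [Matrix.one_apply, Fin.ext_iff, eq_comm]
    | succ k ih =>
      intro i j
      rw [pow_succ, mulMn]
      split_ifs with h1 h2 h2
      · rw [ih, if_pos (by simp only [Fin.val_mk]; omega)]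
      · rw [ih, if_neg (by simp only [Fin.val_mk]; omega)]
      · omega
      · rfl
  have hMnm : Mn ^ m = 0 := by
    ext i j
    rw [hMnpow, if_neg (by have := j.2; omega), Matrix.zero_apply]
  -- the auxiliary matrix B
  set B : Matrix (Fin n) (Fin n) ℝ := Ms + Ms + Mn with hB
  have hMsMs : Ms * Ms = -1 := by rw [← pow_two, hMs2]
  have hkey : M01 ^ 2 + 1 = Mn * B := by
    rw [hM01, pow_two, add_mul, mul_add, mul_add, hcomm, hMsMs, hB]
    rw [mul_add, mul_add]
    abel
  have hcMnMs : Commute Mn Ms := hcomm.symm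
  have hcMnB : Commute Mn B := (hcMnMs.add_right hcMnMs).add_right (Commute.refl Mn)
  have hBu : IsUnit B := by
    have hu2 : IsUnit (Ms + Ms) := by
      have hmul : (Ms + Ms) * ((-2⁻¹ : ℝ) • Ms) = 1 := by
        rw [mul_smul_comm, add_mul, hMsMs]
        module
      have hmul2 : ((-2⁻¹ : ℝ) • Ms) * (Ms + Ms) = 1 := by
        rw [smul_mul_assoc, mul_add, hMsMs]
        module
      exact ⟨⟨_, _, hmul, hmul2⟩, rfl⟩
    exact (IsNilpotent.isUnit_add_left_of_commute ⟨m, hMnm⟩ hu2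
      (hcMnMs.add_right hcMnMs)) 
  -- annihilation
  have hann : aeval M01 ((X ^ 2 + 1 : ℝ[X]) ^ m) = 0 := by
    rw [map_pow, map_add, map_pow, aeval_X, map_one, hkey, hcMnB.mul_pow, hMnm, zero_mul]
  -- the polynomial P
  set P : ℝ[X] := X ^ 2 + 1 with hP
  have hPmonic : P.Monic := by
    have : (1 : ℝ[X]) = C 1 := by simp
    rw [hP, this]
    exact monic_X_pow_add_C _ (by norm_num)
  have hPdeg : P.natDegree = 2 := by
    rw [hP, show (1 : ℝ[X]) = C 1 by simp]
    exact natDegree_X_pow_add_C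
  have hPirr : Irreducible P := by
    rw [hPmonic.irreducible_iff_roots_eq_zero_of_degree_le_three (by omega) (by omega)]
    rw [Multiset.eq_zero_iff_forall_notMem]
    intro a ha
    rw [mem_roots (hPmonic.ne_zero), IsRoot.def, hP, eval_add, eval_pow, eval_X, eval_one] at ha
    nlinarith [sq_nonneg a]
  have hPprime : Prime P := hPirr.prime
  have hint : IsIntegral ℝ M01 := IsIntegral.of_finite ℝ M01
  have hdvd : minpoly ℝ M01 ∣ P ^ m := minpoly.dvd ℝ M01 hann
  obtain ⟨k, hkm, hassoc⟩ := (dvd_prime_pow hPprime m).mp hdvd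
  have hmin : minpoly ℝ M01 = P ^ k :=
    eq_of_monic_of_associated (minpoly.monic hint) (hPmonic.pow k) hassoc
  -- k = m
  have hkeq : k = m := by
    by_contra hne
    have hklt : k ≤ m - 1 := by omega
    have h1 : aeval M01 (P ^ (m - 1)) = 0 := by
      obtain ⟨c, hc⟩ := pow_dvd_pow P hklt
      rw [hc, map_mul, ← hmin, minpoly.aeval, zero_mul]
    rw [map_pow, map_add, map_pow, aeval_X, map_one, hkey, hcMnB.mul_pow] at h1
    have hBu' : IsUnit (B ^ (m - 1)) := hBu.pow _
    have h0 : Mn ^ (m - 1) = 0 := hBu'.mul_left_eq_zero.mp h1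
    have h3 := congrFun (congrFun h0 ⟨0, by omega⟩) ⟨n - 2, by omega⟩
    rw [hMnpow] at h3
    simp only [Fin.val_mk, Matrix.zero_apply] at h3
    rw [if_pos (by omega)] at h3
    norm_num at h3
  -- degrees
  have hminfinal : minpoly ℝ M01 = P ^ m := by rw [hmin, hkeq]
  have hchar : M01.charpoly = P ^ m := by
    obtain ⟨q, hq⟩ : minpoly ℝ M01 ∣ M01.charpoly := Matrix.minpoly_dvd_charpoly M01
    have hcm : M01.charpoly.Monic := Matrix.charpoly_monic M01
    have hcd : M01.charpoly.natDegree = n := by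
      rw [Matrix.charpoly_natDegree_eq_dim, Fintype.card_fin]
    have hmd : (minpoly ℝ M01).natDegree = n := by
      rw [hminfinal, hPmonic.natDegree_pow, hPdeg]
      omega
    have hmne : minpoly ℝ M01 ≠ 0 := (minpoly.monic hint).ne_zero
    have hq0 : q ≠ 0 := by
      rintro rfl
      rw [mul_zero] at hq
      exact hcm.ne_zero hq
    have hqdeg : q.natDegree = 0 := by
      have h4 := natDegree_mul hmne hq0
      rw [← hq, hcd, hmd] at h4
      omega
    have h5 : M01.charpoly.leadingCoeff = 1 := hcm
    rw [hq, leadingCoeff_mul, (minpoly.monic hint).leadingCoeff, one_mul] at h5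
    have hq1 : q = 1 := by
      rw [eq_C_of_natDegree_eq_zero hqdeg]
      rw [leadingCoeff, hqdeg] at h5
      rw [h5, map_one]
    rw [hq, hq1, mul_one, hminfinal]
  exact ⟨hcomm, hMs2, hMnm, hchar, hminfinal⟩
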